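/- Let the linear system $x'=A(t)x$ admit a nonuniform $(h,k,\mu,\nu)$-dichotomy with constants $K, a<0\le b, \varepsilon$ and differentiable growth rates $h,k$. Suppose $f$ satisfies $\|f(t,x)\|\le\alpha\min\{h'(t)h(t)^{-1}\mu(|t|)^{-\varepsilon}, k'(t)k(t)^{-1}\nu(|t|)^{-\varepsilon}\}$ for all $t,x$. Then for each fixed solution $X(t)$ of the nonlinear equation $x'=A(t)x+f(t,x)$, the function $h^*(t)= -\int_{-\infty}^t T(t,\tau)P(\tau)f(\tau,X(\tau))d\tau + \int_t^\infty T(t,\tau)Q(\tau)f(\tau,X(\tau))d\tau$ is well-defined and satisfies $\|h^*(t)\| \le K\alpha(1/|a| + 1/b)$ for all $t\in\mathbb{R}$. -/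

import Mathlib

open Filter ContinuousLinearMap MeasureTheory

/-- Lemma `lezbj`: for a fixed solution `Xs` of the nonlinear system, the function
`h*(t) = -∫_{-∞}^t T(t,τ)P(τ)f(τ,Xs(τ))dτ + ∫_t^∞ T(t,τ)Q(τ)f(τ,Xs(τ))dτ`
is well-defined and bounded by `Kα(1/|a| + 1/b)`. -/
theorem stmt_11 {X : Type*} [NormedAddCommGroup X] [NormedSpace ℝ X] [CompleteSpace X]
    (h k μ ν : ℝ → ℝ) (h' k' : ℝ → ℝ)
    (hmono : Monotone h) (hpos : ∀ t, 0 < h t) (h0 : h 0 = 1)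
    (htop : Tendsto h atTop atTop) (hbot : Tendsto h atBot (nhds 0))
    (kmono : Monotone k) (kpos : ∀ t, 0 < k t) (k0 : k 0 = 1)
    (ktop : Tendsto k atTop atTop) (kbot : Tendsto k atBot (nhds 0))
    (μmono : Monotone μ) (μpos : ∀ t, 0 < μ t) (μ0 : μ 0 = 1)
    (μtop : Tendsto μ atTop atTop) (μbot : Tendsto μ atBot (nhds 0))
    (νmono : Monotone ν) (νpos : ∀ t, 0 < ν t) (ν0 : ν 0 = 1)
    (νtop : Tendsto ν atTop atTop) (νbot : Tendsto ν atBot (nhds 0))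
    (hd : ∀ t, HasDerivAt h (h' t) t) (kd : ∀ t, HasDerivAt k (k' t) t)
    (hc : Continuous h') (kc : Continuous k')
    (hnn : ∀ t, 0 ≤ h' t) (knn : ∀ t, 0 ≤ k' t)
    (K a b ε α : ℝ) (ha : a < 0) (hb : 0 < b) (hε : 0 ≤ ε) (hK : 0 < K) (hα : 0 < α)
    (A : ℝ → X →L[ℝ] X) (hA : Continuous A)
    (T : ℝ → ℝ → X →L[ℝ] X)
    (hTid : ∀ t, T t t = ContinuousLinearMap.id ℝ X)
    (hTderiv : ∀ (s : ℝ) (x : X), ∀ t, HasDerivAt (fun r => T r s x) (A t (T t s x)) t)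
    (hTcont : Continuous fun p : ℝ × ℝ => T p.1 p.2)
    (P : ℝ → X →L[ℝ] X) (hPcont : Continuous P)
    (hproj : ∀ t, P t ∘L P t = P t)
    (hcomm : ∀ t s, P t ∘L T t s = T t s ∘L P s)
    (hbound₁ : ∀ t s, s ≤ t →
      ‖T t s ∘L P s‖ ≤ K * (h t / h s) ^ a * μ |s| ^ ε)
    (hbound₂ : ∀ t s, t ≤ s →
      ‖T t s ∘L (ContinuousLinearMap.id ℝ X - P s)‖ ≤ K * (k s / k t) ^ (-b) * ν |s| ^ ε)
    (f : ℝ → X → X) (hfcont : Continuous fun p : ℝ × X => f p.1 p.2)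
    (hf : ∀ t x, ‖f t x‖ ≤
      α * min (h' t * (h t)⁻¹ * μ |t| ^ (-ε)) (k' t * (k t)⁻¹ * ν |t| ^ (-ε)))
    (Xs : ℝ → X)
    (hXs : ∀ t, HasDerivAt Xs (A t (Xs t) + f t (Xs t)) t) :
    ∀ t : ℝ,
      IntegrableOn (fun τ => (T t τ ∘L P τ) (f τ (Xs τ))) (Set.Iic t) ∧
      IntegrableOn (fun τ =>
        (T t τ ∘L (ContinuousLinearMap.id ℝ X - P τ)) (f τ (Xs τ))) (Set.Ioi t) ∧
      ‖-(∫ τ in Set.Iic t, (T t τ ∘L P τ) (f τ (Xs τ))) +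
          ∫ τ in Set.Ioi t, (T t τ ∘L (ContinuousLinearMap.id ℝ X - P τ)) (f τ (Xs τ))‖ ≤
        K * α * (1 / |a| + 1 / b) := by

  intro t
  -- continuity facts
  have hXscont : Continuous Xs := continuous_iff_continuousAt.2 fun x => (hXs x).continuousAt
  have hhcont : Continuous h := continuous_iff_continuousAt.2 fun x => (hd x).continuousAt
  have hkcont : Continuous k := continuous_iff_continuousAt.2 fun x => (kd x).continuousAt
  have hTt : Continuous fun τ => T t τ :=
    hTcont.comp (continuous_const.prodMk continuous_id)
  have hfX : Continuous fun τ => f τ (Xs τ) :=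
    hfcont.comp (continuous_id.prodMk hXscont)
  have hg₁cont : Continuous fun τ => (T t τ ∘L P τ) (f τ (Xs τ)) :=
    (hTt.clm_comp hPcont).clm_apply hfX
  have hg₂cont : Continuous
      fun τ => (T t τ ∘L (ContinuousLinearMap.id ℝ X - P τ)) (f τ (Xs τ)) :=
    (hTt.clm_comp (continuous_const.sub hPcont)).clm_apply hfX
  -- dominating functions
  set D₁ : ℝ → ℝ := fun τ => h t ^ a * (h τ ^ (-a - 1) * h' τ) with hD₁def
  set D₂ : ℝ → ℝ := fun τ => k t ^ b * (k τ ^ (-b - 1) * k' τ) with hD₂def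
  have htpos : (0:ℝ) < h t ^ a := Real.rpow_pos_of_pos (hpos t) a
  have ktpos : (0:ℝ) < k t ^ b := Real.rpow_pos_of_pos (kpos t) b
  have hD₁nn : ∀ τ, 0 ≤ D₁ τ := fun τ =>
    mul_nonneg htpos.le (mul_nonneg (Real.rpow_nonneg (hpos τ).le _) (hnn τ))
  have hD₂nn : ∀ τ, 0 ≤ D₂ τ := fun τ =>
    mul_nonneg ktpos.le (mul_nonneg (Real.rpow_nonneg (kpos τ).le _) (knn τ))
  have hD₁cont : Continuous D₁ :=
    continuous_const.mul ((hhcont.rpow_const fun x => Or.inl (hpos x).ne').mul hc)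
  have hD₂cont : Continuous D₂ :=
    continuous_const.mul ((hkcont.rpow_const fun x => Or.inl (kpos x).ne').mul kc)
  -- antiderivatives
  set F₁ : ℝ → ℝ := fun τ => h t ^ a * (h τ ^ (-a) / (-a)) with hF₁def
  set F₂ : ℝ → ℝ := fun τ => -(k t ^ b * (k τ ^ (-b) / b)) with hF₂def
  have hF₁d : ∀ τ, HasDerivAt F₁ (D₁ τ) τ := by
    intro τ
    have h1 : HasDerivAt (fun τ => h τ ^ (-a)) (h' τ * (-a) * h τ ^ (-a - 1)) τ :=
      (hd τ).rpow_const (Or.inl (hpos τ).ne')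
    have h2 := (h1.div_const (-a)).const_mul (h t ^ a)
    refine h2.congr_deriv ?_
    simp only [hD₁def]
    field_simp [ha.ne]
  have hF₂d : ∀ τ, HasDerivAt F₂ (D₂ τ) τ := by
    intro τ
    have h1 : HasDerivAt (fun τ => k τ ^ (-b)) (k' τ * (-b) * k τ ^ (-b - 1)) τ :=
      (kd τ).rpow_const (Or.inl (kpos τ).ne')
    have h2 := ((h1.div_const b).const_mul (k t ^ b)).neg
    refine h2.congr_deriv ?_
    simp only [hD₂def]
    field_simp [hb.ne']
  have hF₁nn : ∀ τ, 0 ≤ F₁ τ := fun τ =>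
    mul_nonneg htpos.le
      (div_nonneg (Real.rpow_nonneg (hpos τ).le _) (by linarith))
  -- limits at infinity
  have hF₁bot : Tendsto F₁ atBot (nhds 0) := by
    have h1 : Tendsto (fun τ => h τ ^ (-a)) atBot (nhds 0) := by
      have hc0 : ContinuousAt (fun x : ℝ => x ^ (-a)) 0 :=
        Real.continuousAt_rpow_const 0 (-a) (Or.inr (by linarith))
      have h2 := hc0.tendsto.comp hbot
      simpa [Function.comp_def, Real.zero_rpow (show (-a) ≠ 0 by linarith)] using h2
    have h3 := (h1.div_const (-a)).const_mul (h t ^ a)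
    simpa [hF₁def] using h3
  have hF₂top : Tendsto F₂ atTop (nhds 0) := by
    have h1 : Tendsto (fun τ => k τ ^ (-b)) atTop (nhds 0) :=
      (tendsto_rpow_neg_atTop hb).comp ktop
    have h3 := ((h1.div_const b).const_mul (k t ^ b)).neg
    simpa [hF₂def] using h3
  -- integrability of D₁ on Iic t and value of its integral
  have hD₁int : IntegrableOn D₁ (Set.Iic t) := by
    apply MeasureTheory.integrableOn_Iic_of_intervalIntegral_norm_bounded
      (F₁ t) t (f := D₁) (a := fun s : ℝ => s) (l := atBot)
      (fun i => hD₁cont.integrableOn_Ioc) tendsto_id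
    filter_upwards [eventually_le_atBot t] with i hi
    have heq : (∫ x in i..t, ‖D₁ x‖) = ∫ x in i..t, D₁ x :=
      intervalIntegral.integral_congr fun x _ => Real.norm_of_nonneg (hD₁nn x)
    have hval : (∫ x in i..t, D₁ x) = F₁ t - F₁ i :=
      intervalIntegral.integral_eq_sub_of_hasDerivAt (fun x _ => hF₁d x)
        (hD₁cont.intervalIntegrable i t)
    rw [heq, hval]
    linarith [hF₁nn i]
  have hF₁t : F₁ t = 1 / (-a) := by
    have h1 : h t ^ a * h t ^ (-a) = 1 := by
      rw [← Real.rpow_add (hpos t)]; simp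
    simp only [hF₁def]
    rw [← mul_div_assoc, h1]
  have hD₁val : (∫ τ in Set.Iic t, D₁ τ) = 1 / (-a) := by
    rw [MeasureTheory.integral_Iic_of_hasDerivAt_of_tendsto'
      (fun x _ => hF₁d x) hD₁int hF₁bot, hF₁t, sub_zero]
  -- integrability of D₂ on Ioi t and value of its integral
  have hD₂int : IntegrableOn D₂ (Set.Ioi t) :=
    integrableOn_Ioi_deriv_of_nonneg' (fun x _ => hF₂d x)
      (fun x _ => hD₂nn x) hF₂top
  have hF₂t : F₂ t = -(1 / b) := by
    have h1 : k t ^ b * k t ^ (-b) = 1 := by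
      rw [← Real.rpow_add (kpos t)]; simp
    simp only [hF₂def]
    rw [← mul_div_assoc, h1]
  have hD₂val : (∫ τ in Set.Ioi t, D₂ τ) = 1 / b := by
    rw [integral_Ioi_of_hasDerivAt_of_nonneg' (fun x _ => hF₂d x)
      (fun x _ => hD₂nn x) hF₂top, hF₂t]
    ring
  -- pointwise bounds
  have key₁ : ∀ τ : ℝ, τ ≤ t →
      ‖(T t τ ∘L P τ) (f τ (Xs τ))‖ ≤ K * α * D₁ τ := by
    intro τ hτ
    have hb1 := hbound₁ t τ hτ
    have hf1 : ‖f τ (Xs τ)‖ ≤ α * (h' τ * (h τ)⁻¹ * μ |τ| ^ (-ε)) :=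
      le_trans (hf τ (Xs τ))
        (mul_le_mul_of_nonneg_left (min_le_left _ _) hα.le)
    have h0 : ‖(T t τ ∘L P τ) (f τ (Xs τ))‖ ≤ ‖T t τ ∘L P τ‖ * ‖f τ (Xs τ)‖ :=
      ContinuousLinearMap.le_opNorm _ _
    have hprod : ‖T t τ ∘L P τ‖ * ‖f τ (Xs τ)‖ ≤
        (K * (h t / h τ) ^ a * μ |τ| ^ ε) * (α * (h' τ * (h τ)⁻¹ * μ |τ| ^ (-ε))) := by
      apply mul_le_mul hb1 hf1 (norm_nonneg _)
      exact mul_nonneg (mul_nonneg hK.le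
        (Real.rpow_nonneg (div_nonneg (hpos t).le (hpos τ).le) _))
        (Real.rpow_nonneg (μpos _).le _)
    have heq : (K * (h t / h τ) ^ a * μ |τ| ^ ε) *
        (α * (h' τ * (h τ)⁻¹ * μ |τ| ^ (-ε))) = K * α * D₁ τ := by
      have h1 : (h t / h τ) ^ a = h t ^ a * h τ ^ (-a) := by
        rw [Real.div_rpow (hpos t).le (hpos τ).le, Real.rpow_neg (hpos τ).le,
          div_eq_mul_inv]
      have h2 : μ |τ| ^ ε * μ |τ| ^ (-ε) = 1 := by
        rw [← Real.rpow_add (μpos _)]; simp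
      have h3 : h τ ^ (-a) * (h τ)⁻¹ = h τ ^ (-a - 1) := by
        rw [← Real.rpow_neg_one (h τ), ← Real.rpow_add (hpos τ)]
        ring_nf
      calc (K * (h t / h τ) ^ a * μ |τ| ^ ε) *
            (α * (h' τ * (h τ)⁻¹ * μ |τ| ^ (-ε)))
          = K * α * (h t ^ a * ((h τ ^ (-a) * (h τ)⁻¹) * h' τ)) *
            (μ |τ| ^ ε * μ |τ| ^ (-ε)) := by rw [h1]; ring
        _ = K * α * D₁ τ := by rw [h2, h3, hD₁def, mul_one]
    calc ‖(T t τ ∘L P τ) (f τ (Xs τ))‖ ≤ ‖T t τ ∘L P τ‖ * ‖f τ (Xs τ)‖ := h0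
      _ ≤ _ := hprod
      _ = K * α * D₁ τ := heq
  have key₂ : ∀ τ : ℝ, t ≤ τ →
      ‖(T t τ ∘L (ContinuousLinearMap.id ℝ X - P τ)) (f τ (Xs τ))‖ ≤ K * α * D₂ τ := by
    intro τ hτ
    have hb1 := hbound₂ t τ hτ
    have hf1 : ‖f τ (Xs τ)‖ ≤ α * (k' τ * (k τ)⁻¹ * ν |τ| ^ (-ε)) :=
      le_trans (hf τ (Xs τ))
        (mul_le_mul_of_nonneg_left (min_le_right _ _) hα.le)
    have h0 : ‖(T t τ ∘L (ContinuousLinearMap.id ℝ X - P τ)) (f τ (Xs τ))‖ ≤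
        ‖T t τ ∘L (ContinuousLinearMap.id ℝ X - P τ)‖ * ‖f τ (Xs τ)‖ :=
      ContinuousLinearMap.le_opNorm _ _
    have hprod : ‖T t τ ∘L (ContinuousLinearMap.id ℝ X - P τ)‖ * ‖f τ (Xs τ)‖ ≤
        (K * (k τ / k t) ^ (-b) * ν |τ| ^ ε) *
          (α * (k' τ * (k τ)⁻¹ * ν |τ| ^ (-ε))) := by
      apply mul_le_mul hb1 hf1 (norm_nonneg _)
      exact mul_nonneg (mul_nonneg hK.le
        (Real.rpow_nonneg (div_nonneg (kpos τ).le (kpos t).le) _))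
        (Real.rpow_nonneg (νpos _).le _)
    have heq : (K * (k τ / k t) ^ (-b) * ν |τ| ^ ε) *
        (α * (k' τ * (k τ)⁻¹ * ν |τ| ^ (-ε))) = K * α * D₂ τ := by
      have h1 : (k τ / k t) ^ (-b) = k τ ^ (-b) * k t ^ b := by
        rw [Real.div_rpow (kpos τ).le (kpos t).le, Real.rpow_neg (kpos τ).le,
          Real.rpow_neg (kpos t).le, div_eq_mul_inv, inv_inv]
      have h2 : ν |τ| ^ ε * ν |τ| ^ (-ε) = 1 := by
        rw [← Real.rpow_add (νpos _)]; simp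
      have h3 : k τ ^ (-b) * (k τ)⁻¹ = k τ ^ (-b - 1) := by
        rw [← Real.rpow_neg_one (k τ), ← Real.rpow_add (kpos τ)]
        ring_nf
      calc (K * (k τ / k t) ^ (-b) * ν |τ| ^ ε) *
            (α * (k' τ * (k τ)⁻¹ * ν |τ| ^ (-ε)))
          = K * α * (k t ^ b * ((k τ ^ (-b) * (k τ)⁻¹) * k' τ)) *
            (ν |τ| ^ ε * ν |τ| ^ (-ε)) := by rw [h1]; ring
        _ = K * α * D₂ τ := by rw [h2, h3, hD₂def, mul_one]
    calc ‖(T t τ ∘L (ContinuousLinearMap.id ℝ X - P τ)) (f τ (Xs τ))‖ ≤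
        ‖T t τ ∘L (ContinuousLinearMap.id ℝ X - P τ)‖ * ‖f τ (Xs τ)‖ := h0
      _ ≤ _ := hprod
      _ = K * α * D₂ τ := heq
  -- integrability of the two integrands
  have hKα : (0:ℝ) ≤ K * α := by positivity
  have hKD₁int : IntegrableOn (fun τ => K * α * D₁ τ) (Set.Iic t) :=
    hD₁int.const_mul (K * α)
  have hKD₂int : IntegrableOn (fun τ => K * α * D₂ τ) (Set.Ioi t) :=
    hD₂int.const_mul (K * α)
  have hae₁ : ∀ᵐ τ ∂(volume.restrict (Set.Iic t)),
      ‖(T t τ ∘L P τ) (f τ (Xs τ))‖ ≤ K * α * D₁ τ := by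
    filter_upwards [MeasureTheory.ae_restrict_mem measurableSet_Iic] with τ hτ
    exact key₁ τ hτ
  have hae₂ : ∀ᵐ τ ∂(volume.restrict (Set.Ioi t)),
      ‖(T t τ ∘L (ContinuousLinearMap.id ℝ X - P τ)) (f τ (Xs τ))‖ ≤ K * α * D₂ τ := by
    filter_upwards [MeasureTheory.ae_restrict_mem measurableSet_Ioi] with τ hτ
    exact key₂ τ (le_of_lt hτ)
  have hint₁ : IntegrableOn (fun τ => (T t τ ∘L P τ) (f τ (Xs τ))) (Set.Iic t) := by
    apply MeasureTheory.Integrable.mono hKD₁int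
      (hg₁cont.aestronglyMeasurable.restrict)
    filter_upwards [hae₁] with τ hτ
    calc ‖(T t τ ∘L P τ) (f τ (Xs τ))‖ ≤ K * α * D₁ τ := hτ
      _ ≤ ‖K * α * D₁ τ‖ := le_abs_self _
  have hint₂ : IntegrableOn
      (fun τ => (T t τ ∘L (ContinuousLinearMap.id ℝ X - P τ)) (f τ (Xs τ)))
      (Set.Ioi t) := by
    apply MeasureTheory.Integrable.mono hKD₂int
      (hg₂cont.aestronglyMeasurable.restrict)
    filter_upwards [hae₂] with τ hτ
    calc ‖(T t τ ∘L (ContinuousLinearMap.id ℝ X - P τ)) (f τ (Xs τ))‖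
        ≤ K * α * D₂ τ := hτ
      _ ≤ ‖K * α * D₂ τ‖ := le_abs_self _
  refine ⟨hint₁, hint₂, ?_⟩
  -- norm bounds on the integrals
  have hnorm₁ : ‖∫ τ in Set.Iic t, (T t τ ∘L P τ) (f τ (Xs τ))‖ ≤
      K * α * (1 / (-a)) := by
    calc ‖∫ τ in Set.Iic t, (T t τ ∘L P τ) (f τ (Xs τ))‖
        ≤ ∫ τ in Set.Iic t, K * α * D₁ τ :=
          MeasureTheory.norm_integral_le_of_norm_le hKD₁int hae₁
      _ = K * α * ∫ τ in Set.Iic t, D₁ τ := MeasureTheory.integral_const_mul _ _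
      _ = K * α * (1 / (-a)) := by rw [hD₁val]
  have hnorm₂ : ‖∫ τ in Set.Ioi t,
      (T t τ ∘L (ContinuousLinearMap.id ℝ X - P τ)) (f τ (Xs τ))‖ ≤
      K * α * (1 / b) := by
    calc ‖∫ τ in Set.Ioi t, (T t τ ∘L (ContinuousLinearMap.id ℝ X - P τ)) (f τ (Xs τ))‖
        ≤ ∫ τ in Set.Ioi t, K * α * D₂ τ :=
          MeasureTheory.norm_integral_le_of_norm_le hKD₂int hae₂
      _ = K * α * ∫ τ in Set.Ioi t, D₂ τ := MeasureTheory.integral_const_mul _ _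
      _ = K * α * (1 / b) := by rw [hD₂val]
  have habs : |a| = -a := abs_of_neg ha
  calc ‖-(∫ τ in Set.Iic t, (T t τ ∘L P τ) (f τ (Xs τ))) +
      ∫ τ in Set.Ioi t, (T t τ ∘L (ContinuousLinearMap.id ℝ X - P τ)) (f τ (Xs τ))‖
      ≤ ‖-(∫ τ in Set.Iic t, (T t τ ∘L P τ) (f τ (Xs τ)))‖ +
        ‖∫ τ in Set.Ioi t, (T t τ ∘L (ContinuousLinearMap.id ℝ X - P τ)) (f τ (Xs τ))‖ :=
        norm_add_le _ _
    _ ≤ K * α * (1 / (-a)) + K * α * (1 / b) := by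
        rw [norm_neg]; exact add_le_add hnorm₁ hnorm₂
    _ = K * α * (1 / |a| + 1 / b) := by rw [habs]; ring
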